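/- Let M_q(n) be the standard quantized matrix algebra over K with n ≥ 2 and q ≠ 0, and assume the ordered monomials {z^α : α ∈ ℕ^{I(n)}} form a K-basis of M_q(n). Then the lexicographic order ≺ satisfies condition (2) of the definition of a monomial ordering: for all α, β, η, γ ∈ ℕ^{I(n)}, if γ ≠ 0, β ≠ γ, and γ = LE(z^α z^β z^η), then β ≺ γ; in particular 0 ≺ γ for every γ ≠ 0. -/

import Mathlib

/-! Common setup: the standard quantized matrix algebra `M_q(n)` of
Faddeev–Reshetikhin–Takhtajan, defined as the quotient of the free
`K`-algebra on the `n²` generators `z_{ij}` by the two-sided ideal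
generated by the relations R1–R4. -/

/-- The generator `z_{ij}` of the free algebra on `Fin n × Fin n`. -/
noncomputable def freeGen (K : Type*) [Field K] (n : ℕ) (i j : Fin n) :
    FreeAlgebra K (Fin n × Fin n) :=
  FreeAlgebra.ι K (i, j)

/-- The defining relations R1–R4 of the standard quantized matrix algebra. -/
inductive QMRel (K : Type*) [Field K] (q : K) (n : ℕ) :
    FreeAlgebra K (Fin n × Fin n) → FreeAlgebra K (Fin n × Fin n) → Prop
  | r1 (i j k : Fin n) (h : j < k) :
      QMRel K q n (freeGen K n i j * freeGen K n i k)
        (q • (freeGen K n i k * freeGen K n i j))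
  | r2 (i j k : Fin n) (h : i < k) :
      QMRel K q n (freeGen K n i j * freeGen K n k j)
        (q • (freeGen K n k j * freeGen K n i j))
  | r3 (i j s t : Fin n) (h1 : i < s) (h2 : t < j) :
      QMRel K q n (freeGen K n i j * freeGen K n s t)
        (freeGen K n s t * freeGen K n i j)
  | r4 (i j s t : Fin n) (h1 : i < s) (h2 : j < t) :
      QMRel K q n (freeGen K n i j * freeGen K n s t)
        (freeGen K n s t * freeGen K n i j +
          (q - q⁻¹) • (freeGen K n i t * freeGen K n s j))

/-- The standard quantized matrix algebra `M_q(n)`: the quotient of the free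
algebra by the two-sided ideal generated by the relations R1–R4. -/
abbrev QuantumMatrix (K : Type*) [Field K] (q : K) (n : ℕ) :=
  RingQuot (QMRel K q n)

/-- The generator `z_{ij}` of `M_q(n)`. -/
noncomputable def Zgen (K : Type*) [Field K] (q : K) (n : ℕ) (i j : Fin n) :
    QuantumMatrix K q n :=
  RingQuot.mkAlgHom K (QMRel K q n) (freeGen K n i j)

/-- The order on the index set `I(n)`: `(k,l) < (i,j)` iff `k < i`, or
`k = i` and `l < j`. -/
def idxLt {n : ℕ} (p r : Fin n × Fin n) : Prop :=
  p.1 < r.1 ∨ (p.1 = r.1 ∧ p.2 < r.2)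

/-- The ordered monomial `z^α`: the product of the `z_{ij}^{α_{ij}}` taken
in decreasing order of the indices `(i,j)`, i.e.
`z_{nn}^{α_{nn}} z_{n,n-1}^{α_{n,n-1}} ⋯ z_{n1}^{α_{n1}} ⋯ z_{11}^{α_{11}}`. -/
noncomputable def zmon (K : Type*) [Field K] (q : K) {n : ℕ}
    (α : Fin n × Fin n → ℕ) : QuantumMatrix K q n :=
  ((List.finRange n).reverse.flatMap fun i =>
    (List.finRange n).reverse.map fun j => Zgen K q n i j ^ α (i, j)).prod

/-- The lexicographic order on exponent vectors: `α ≺ β` iff `α` is smaller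
than `β` at the largest index (w.r.t. the order on `I(n)`) at which they
differ. -/
def expLt {n : ℕ} (α β : Fin n × Fin n → ℕ) : Prop :=
  ∃ p : Fin n × Fin n, α p < β p ∧ ∀ r : Fin n × Fin n, idxLt p r → α r = β r

/-- The indicator exponent vector `ε_{ij}`. -/
def eps {n : ℕ} (i j : Fin n) : Fin n × Fin n → ℕ :=
  fun p => if p = (i, j) then 1 else 0

/-- `γ` is the leading exponent of `f` with respect to the order `lt`,
relative to the PBW basis `b` indexed by exponent vectors:
`γ` occurs with nonzero coefficient in the expansion of `f` and every other
exponent occurring in `f` is `lt`-smaller than `γ`. -/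
def IsLeadExpWrt {K : Type*} [Field K] {q : K} {n : ℕ}
    (lt : (Fin n × Fin n → ℕ) → (Fin n × Fin n → ℕ) → Prop)
    (b : Module.Basis (Fin n × Fin n → ℕ) K (QuantumMatrix K q n))
    (f : QuantumMatrix K q n) (γ : Fin n × Fin n → ℕ) : Prop :=
  b.repr f γ ≠ 0 ∧ ∀ δ, b.repr f δ ≠ 0 → δ = γ ∨ lt δ γ

/-- `γ` is the leading exponent of `f` w.r.t. the lexicographic order. -/
def IsLeadExp {K : Type*} [Field K] {q : K} {n : ℕ}
    (b : Module.Basis (Fin n × Fin n → ℕ) K (QuantumMatrix K q n))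
    (f : QuantumMatrix K q n) (γ : Fin n × Fin n → ℕ) : Prop :=
  IsLeadExpWrt expLt b f γ

section OrderLemmas

variable {n : ℕ}

/-- Rank of an index. -/
def rk {n : ℕ} (p : Fin n × Fin n) : ℕ := p.1 * n + p.2

lemma rank_lt_iff (a c : ℕ) {b d n : ℕ} (hb : b < n) (hd : d < n) :
    a * n + b < c * n + d ↔ a < c ∨ (a = c ∧ b < d) := by
  constructor
  · intro h
    rcases Nat.lt_trichotomy a c with h1 | h1 | h1
    · exact Or.inl h1
    · subst h1; exact Or.inr ⟨rfl, by omega⟩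
    · exfalso
      have : c * n + n ≤ a * n := by
        calc c * n + n = (c + 1) * n := by ring
        _ ≤ a * n := Nat.mul_le_mul_right _ h1
      omega
  · rintro (h | ⟨rfl, h⟩)
    · have : a * n + n ≤ c * n := by
        calc a * n + n = (a + 1) * n := by ring
        _ ≤ c * n := Nat.mul_le_mul_right _ h
      omega
    · omega

lemma idxLt_iff_rk (p r : Fin n × Fin n) : idxLt p r ↔ rk p < rk r := by
  unfold idxLt rk
  rw [rank_lt_iff _ _ p.2.isLt r.2.isLt]
  constructor
  · rintro (h | ⟨h, h2⟩)
    · exact Or.inl h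
    · exact Or.inr ⟨congrArg Fin.val h, h2⟩
  · rintro (h | ⟨h, h2⟩)
    · exact Or.inl h
    · exact Or.inr ⟨Fin.val_injective h, h2⟩

lemma idx_trichot (p r : Fin n × Fin n) : p = r ∨ idxLt p r ∨ idxLt r p := by
  rcases lt_trichotomy p.1 r.1 with h | h | h
  · exact Or.inr (Or.inl (Or.inl h))
  · rcases lt_trichotomy p.2 r.2 with h2 | h2 | h2
    · exact Or.inr (Or.inl (Or.inr ⟨h, h2⟩))
    · exact Or.inl (Prod.ext h h2)
    · exact Or.inr (Or.inr (Or.inr ⟨h.symm, h2⟩))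
  · exact Or.inr (Or.inr (Or.inl h))

lemma rk_inj : Function.Injective (rk (n := n)) := by
  intro p r h
  rcases idx_trichot p r with h' | h' | h'
  · exact h'
  · rw [idxLt_iff_rk] at h'; omega
  · rw [idxLt_iff_rk] at h'; omega

lemma idxLt_trans {p r s : Fin n × Fin n} (h1 : idxLt p r) (h2 : idxLt r s) :
    idxLt p s := by
  rw [idxLt_iff_rk] at *; omega

lemma expLt_irrefl (α : Fin n × Fin n → ℕ) : ¬ expLt α α := by
  rintro ⟨p, hp, -⟩; omega

lemma expLt_asymm {α β : Fin n × Fin n → ℕ} (h1 : expLt α β) (h2 : expLt β α) :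
    False := by
  obtain ⟨p, hp, hpa⟩ := h1
  obtain ⟨r, hr, hra⟩ := h2
  rcases idx_trichot p r with rfl | h | h
  · omega
  · have := hpa r h; omega
  · have := hra p h; omega

lemma expLt_trans {α β γ : Fin n × Fin n → ℕ} (h1 : expLt α β)
    (h2 : expLt β γ) : expLt α γ := by
  obtain ⟨p, hp, hpa⟩ := h1
  obtain ⟨r, hr, hra⟩ := h2
  rcases idx_trichot p r with rfl | h | h
  · exact ⟨p, by omega, fun s hs => (hpa s hs).trans (hra s hs)⟩
  · refine ⟨r, ?_, fun s hs => (hpa s (idxLt_trans h hs)).trans (hra s hs)⟩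
    have := hpa r h; omega
  · refine ⟨p, ?_, fun s hs => (hpa s hs).trans (hra s (idxLt_trans h hs))⟩
    have := hra p h; omega

lemma expLt_of_le_of_ne {α β : Fin n × Fin n → ℕ} (hle : ∀ p, α p ≤ β p)
    (hne : α ≠ β) : expLt α β := by
  have hnonempty : (Finset.univ.filter fun p => α p ≠ β p).Nonempty := by
    rcases Function.ne_iff.mp hne with ⟨p, hp⟩
    exact ⟨p, by simp [hp]⟩
  obtain ⟨p, hpmem, hpmax⟩ :=
    Finset.exists_max_image (Finset.univ.filter fun p => α p ≠ β p) rk hnonempty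
  simp only [Finset.mem_filter, Finset.mem_univ, true_and] at hpmem
  refine ⟨p, lt_of_le_of_ne (hle p) hpmem, fun r hr => ?_⟩
  by_contra hne'
  have := hpmax r (by simp [hne'])
  rw [idxLt_iff_rk] at hr; omega

end OrderLemmas
section Words

variable (K : Type*) [Field K] (q : K) {n : ℕ}

/-- Generator indexed by a pair. -/
noncomputable def Zg (p : Fin n × Fin n) : QuantumMatrix K q n :=
  Zgen K q n p.1 p.2

/-- Product of generators along a word. -/
noncomputable def Zprod (w : List (Fin n × Fin n)) : QuantumMatrix K q n :=
  (w.map (Zg K q)).prod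

/-- Exponent vector of a word. -/
def esum (w : List (Fin n × Fin n)) : Fin n × Fin n → ℕ :=
  (w.map fun p => eps p.1 p.2).sum

/-- The canonical sorted word of an exponent vector. -/
def word (α : Fin n × Fin n → ℕ) : List (Fin n × Fin n) :=
  (List.finRange n).reverse.flatMap fun i =>
    (List.finRange n).reverse.flatMap fun j => List.replicate (α (i, j)) (i, j)

lemma Zprod_nil : Zprod K q ([] : List (Fin n × Fin n)) = 1 := rfl

lemma Zprod_cons (p : Fin n × Fin n) (w : List (Fin n × Fin n)) :
    Zprod K q (p :: w) = Zg K q p * Zprod K q w := by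
  simp [Zprod]

lemma Zprod_append (w₁ w₂ : List (Fin n × Fin n)) :
    Zprod K q (w₁ ++ w₂) = Zprod K q w₁ * Zprod K q w₂ := by
  simp [Zprod]

lemma esum_nil : esum ([] : List (Fin n × Fin n)) = 0 := rfl

lemma esum_cons (p : Fin n × Fin n) (w : List (Fin n × Fin n))
    (r : Fin n × Fin n) :
    esum (p :: w) r = (if r = p then 1 else 0) + esum w r := by
  have h1 : esum (p :: w) r = eps p.1 p.2 r + esum w r := by simp [esum]
  rw [h1]
  simp [eps]

lemma esum_apply (w : List (Fin n × Fin n)) (r : Fin n × Fin n) :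
    esum w r = @List.count _ instBEqOfDecidableEq r w := by
  induction w with
  | nil => simp [esum]
  | cons p w ih =>
    rw [esum_cons, ih, @List.count_cons _ instBEqOfDecidableEq]
    by_cases h : r = p
    · subst h; simp [instBEqOfDecidableEq, Nat.add_comm]
    · simp [instBEqOfDecidableEq, h, Ne.symm h]

lemma esum_append (w₁ w₂ : List (Fin n × Fin n)) :
    esum (w₁ ++ w₂) = esum w₁ + esum w₂ := by
  simp [esum]

lemma sum_rev_finRange {M : Type*} [AddCommMonoid M] (f : Fin n → M) :
    ((List.finRange n).reverse.map f).sum = ∑ i, f i := by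
  rw [List.map_reverse, List.sum_reverse, Fin.sum_univ_def]

lemma sum_flatMap' {ι : Type*} {M : Type*} [AddCommMonoid M] (l : List ι)
    (f : ι → List M) :
    (l.flatMap f).sum = (l.map fun a => (f a).sum).sum := by
  induction l with
  | nil => simp
  | cons a l ih => simp [List.flatMap_cons, List.sum_append, ih]

lemma esum_word (α : Fin n × Fin n → ℕ) : esum (word α) = α := by
  funext r
  obtain ⟨a, b⟩ := r
  rw [esum, word, List.map_flatMap, sum_flatMap']
  simp only [List.map_flatMap, List.map_replicate, sum_flatMap',
    List.sum_replicate, List.map_map]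
  have key : ∀ g : Fin n → (Fin n × Fin n → ℕ),
      (((List.finRange n).reverse.map g).sum) (a, b)
      = ∑ i, g i (a, b) := by
    intro g
    rw [sum_rev_finRange]
    simp
  rw [key]
  have key2 : ∀ i : Fin n,
      (((List.finRange n).reverse.map fun j => α (i, j) • eps i j).sum) (a, b)
      = ∑ j, α (i, j) • eps i j (a, b) := by
    intro i
    rw [sum_rev_finRange]
    simp
  have : ∀ i : Fin n, (((List.finRange n).reverse.map
      (fun j => α (i, j) • eps i j)).sum) (a, b)
      = ∑ j, if (a, b) = ((i, j) : Fin n × Fin n) then α (i, j) else 0 := by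
    intro i
    rw [key2]
    congr 1
    funext j
    by_cases hj : ((a, b) : Fin n × Fin n) = (i, j) <;> simp [eps, hj]
  simp only [Function.comp_def, this]
  simp [Prod.mk.injEq, ite_and, Finset.sum_ite_eq, Finset.sum_ite_eq']

/-- The "sortedness" relation: decreasing rank. -/
def wR {n : ℕ} (p r : Fin n × Fin n) : Prop := rk r ≤ rk p

lemma word_sorted (α : Fin n × Fin n → ℕ) : (word α).Pairwise wR := by
  rw [word, List.pairwise_flatMap]
  constructor
  · intro i _
    rw [List.pairwise_flatMap]
    constructor
    · intro j _
      rw [List.pairwise_replicate]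
      exact Or.inr (le_refl _)
    · rw [List.pairwise_reverse]
      refine (List.pairwise_lt_finRange n).imp ?_
      intro j₁ j₂ h x hx y hy
      rw [List.eq_of_mem_replicate hx, List.eq_of_mem_replicate hy]
      have : idxLt (i, j₁) (i, j₂) := Or.inr ⟨rfl, h⟩
      rw [idxLt_iff_rk] at this
      exact le_of_lt this
  · rw [List.pairwise_reverse]
    refine (List.pairwise_lt_finRange n).imp ?_
    intro i₁ i₂ h x hx y hy
    rw [List.mem_flatMap] at hx hy
    obtain ⟨j₁, -, hx⟩ := hx
    obtain ⟨j₂, -, hy⟩ := hy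
    rw [List.eq_of_mem_replicate hx, List.eq_of_mem_replicate hy]
    have : idxLt (i₁, j₂) (i₂, j₁) := Or.inl h
    rw [idxLt_iff_rk] at this
    exact le_of_lt this

lemma prod_flatMap' {ι : Type*} {M : Type*} [Monoid M] (l : List ι)
    (f : ι → List M) :
    (l.flatMap f).prod = (l.map fun a => (f a).prod).prod := by
  induction l with
  | nil => simp
  | cons a l ih => simp [List.flatMap_cons, List.prod_append, ih]

lemma Zprod_word (α : Fin n × Fin n → ℕ) :
    Zprod K q (word α) = zmon K q α := by
  rw [Zprod, word, zmon, List.map_flatMap, prod_flatMap', prod_flatMap']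
  simp only [List.map_flatMap, List.map_replicate, prod_flatMap',
    List.prod_replicate, List.map_map]
  rfl

lemma Zprod_sorted (w : List (Fin n × Fin n)) (hw : w.Pairwise wR) :
    Zprod K q w = zmon K q (esum w) := by
  have hperm : w.Perm (word (esum w)) := by
    rw [List.perm_iff_count]
    intro r
    convert (esum_apply w r).symm.trans ((congrFun (esum_word (esum w)) r).symm.trans (esum_apply _ r)) using 2
    all_goals exact lawful_beq_subsingleton _ _
  have : IsAntisymm (Fin n × Fin n) wR :=
    ⟨fun a b h1 h2 => rk_inj (n := n) (le_antisymm h2 h1)⟩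
  have heq : w = word (esum w) :=
    List.Perm.eq_of_pairwise (fun a b _ _ h1 h2 => rk_inj (n := n) (le_antisymm h2 h1)) hw (word_sorted _) hperm
  conv_lhs => rw [heq]
  rw [Zprod_word]
end Words
section Measure

variable {n : ℕ}

/-- Number of inversions. -/
def nInv : List (Fin n × Fin n) → ℕ
  | [] => 0
  | p :: w => (w.countP fun r => decide (rk p < rk r)) + nInv w

lemma nInv_le (w : List (Fin n × Fin n)) : nInv w ≤ w.length * w.length := by
  induction w with
  | nil => simp [nInv]
  | cons p w ih =>
    have h1 := List.countP_le_length (p := fun r => decide (rk p < rk r)) (l := w)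
    have h2 : (w.length + 1) * (w.length + 1)
        = w.length * w.length + 2 * w.length + 1 := by ring
    simp only [nInv, List.length_cons]
    omega

lemma nInv_swap (u v : List (Fin n × Fin n)) (a b : Fin n × Fin n)
    (h : rk a < rk b) :
    nInv (u ++ b :: a :: v) < nInv (u ++ a :: b :: v) := by
  induction u with
  | nil =>
    simp only [List.nil_append, nInv, List.countP_cons, decide_eq_true_eq]
    have hba : ¬ rk b < rk a := by omega
    simp [h, hba]
    omega
  | cons x u ih =>
    have hcount : ∀ c d : Fin n × Fin n,
        (u ++ c :: d :: v).countP (fun r => decide (rk x < rk r))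
        = (u ++ d :: c :: v).countP (fun r => decide (rk x < rk r)) := by
      intro c d
      simp [List.countP_append, List.countP_cons]
      omega
    simp only [List.cons_append, nInv, List.append_eq]
    rw [hcount b a]
    omega

lemma sorted_or_swap (w : List (Fin n × Fin n)) :
    w.Pairwise wR ∨
      ∃ u a b v, w = u ++ a :: b :: v ∧ rk a < rk b := by
  induction w with
  | nil => left; simp
  | cons p w ih =>
    match w, ih with
    | [], _ => left; simp
    | r :: v, ih =>
      by_cases h : rk p < rk r
      · right; exact ⟨[], p, r, v, rfl, h⟩
      · rcases ih with hs | ⟨u, a, b, v', he, hab⟩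
        · left
          have htrans : IsTrans (Fin n × Fin n) wR :=
            ⟨fun x y z h1 h2 => le_trans h2 h1⟩
          have hpr : wR p r := Nat.le_of_not_lt h
          rw [← List.isChain_iff_pairwise] at hs ⊢
          exact List.isChain_cons_cons.mpr ⟨hpr, hs⟩
        · right; exact ⟨p :: u, a, b, v', by rw [he, List.cons_append], hab⟩

/-- Positional value of a word. -/
noncomputable def phi (w : List (Fin n × Fin n)) : ℕ :=
  ∑ p : Fin n × Fin n, esum w p * (w.length + 1) ^ rk p

/-- The termination measure. -/
noncomputable def mu (w : List (Fin n × Fin n)) : ℕ :=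
  phi w * (w.length + 1) ^ 2 + nInv w

lemma geom_bound (B : ℕ) (hB : 1 ≤ B) (R : ℕ) :
    (B - 1) * ∑ k ∈ Finset.range R, B ^ k < B ^ R := by
  induction R with
  | zero => simp
  | succ R ih =>
    rw [Finset.sum_range_succ, pow_succ]
    have h1 : (B - 1) * (∑ k ∈ Finset.range R, B ^ k + B ^ R)
        = (B - 1) * ∑ k ∈ Finset.range R, B ^ k + (B - 1) * B ^ R := by ring
    have h2 : B ^ R + (B - 1) * B ^ R = (1 + (B - 1)) * B ^ R := by ring
    have h3 : 1 + (B - 1) = B := by omega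
    rw [h1]
    have h4 : (1 + (B - 1)) * B ^ R = B * B ^ R := by rw [h3]
    have h5 : B ^ R * B = B * B ^ R := by ring
    omega

lemma sum_low_lt (B R : ℕ) (hB : 1 ≤ B) (δ : Fin n × Fin n → ℕ)
    (hδ : ∀ p, δ p < B) (s : Finset (Fin n × Fin n))
    (hs : ∀ p ∈ s, rk p < R) :
    ∑ p ∈ s, δ p * B ^ rk p < B ^ R := by
  have h1 : ∑ p ∈ s, δ p * B ^ rk p ≤ ∑ p ∈ s, (B - 1) * B ^ rk p :=
    Finset.sum_le_sum fun p _ => Nat.mul_le_mul_right _ (by have := hδ p; omega)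
  have h2 : ∑ p ∈ s, (B - 1) * B ^ rk p
      = ∑ k ∈ s.image rk, (B - 1) * B ^ k :=
    (Finset.sum_image (f := fun k => (B - 1) * B ^ k)
      (fun x _ y _ hxy => rk_inj hxy)).symm
  have h3 : s.image rk ⊆ Finset.range R := by
    intro k hk
    rw [Finset.mem_image] at hk
    obtain ⟨p, hp, rfl⟩ := hk
    exact Finset.mem_range.mpr (hs p hp)
  have h4 : ∑ k ∈ s.image rk, (B - 1) * B ^ k
      ≤ ∑ k ∈ Finset.range R, (B - 1) * B ^ k :=
    Finset.sum_le_sum_of_subset h3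
  have h5 : ∑ k ∈ Finset.range R, (B - 1) * B ^ k
      = (B - 1) * ∑ k ∈ Finset.range R, B ^ k := by
    rw [Finset.mul_sum]
  have h6 := geom_bound B hB R
  omega

lemma phi_lt_phi {δ γ : Fin n × Fin n → ℕ} (B : ℕ) (hB : 1 ≤ B)
    (hδ : ∀ p, δ p < B) (h : expLt δ γ) :
    ∑ p : Fin n × Fin n, δ p * B ^ rk p
      < ∑ p : Fin n × Fin n, γ p * B ^ rk p := by
  obtain ⟨p0, hlt, hagree⟩ := h
  set R := rk p0 with hR
  have hsplit : ∀ f : Fin n × Fin n → ℕ,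
      (∑ p : Fin n × Fin n, f p * B ^ rk p)
      = f p0 * B ^ R
        + ∑ p ∈ (Finset.univ.erase p0).filter (fun p => R < rk p),
            f p * B ^ rk p
        + ∑ p ∈ (Finset.univ.erase p0).filter (fun p => ¬ R < rk p),
            f p * B ^ rk p := by
    intro f
    rw [← Finset.add_sum_erase _ _ (Finset.mem_univ p0)]
    rw [← Finset.sum_filter_add_sum_filter_not (Finset.univ.erase p0)
      (fun p => R < rk p)]
    ring
  rw [hsplit δ, hsplit γ]
  have heq : ∑ p ∈ (Finset.univ.erase p0).filter (fun p => R < rk p),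
      δ p * B ^ rk p
      = ∑ p ∈ (Finset.univ.erase p0).filter (fun p => R < rk p),
      γ p * B ^ rk p := by
    refine Finset.sum_congr rfl fun p hp => ?_
    rw [Finset.mem_filter] at hp
    have : idxLt p0 p := (idxLt_iff_rk p0 p).mpr hp.2
    rw [hagree p this]
  have hlow : ∑ p ∈ (Finset.univ.erase p0).filter (fun p => ¬ R < rk p),
      δ p * B ^ rk p < B ^ R := by
    refine sum_low_lt B R hB δ hδ _ fun p hp => ?_
    rw [Finset.mem_filter, Finset.mem_erase] at hp
    have : rk p ≠ R := fun hc => hp.1.1 (rk_inj hc)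
    omega
  have hmul : (δ p0 + 1) * B ^ R ≤ γ p0 * B ^ R :=
    Nat.mul_le_mul_right _ (by omega)
  have hring : δ p0 * B ^ R + B ^ R = (δ p0 + 1) * B ^ R := by ring
  omega

lemma esum_lt_len (w : List (Fin n × Fin n)) (p : Fin n × Fin n) :
    esum w p ≤ w.length := by
  rw [esum_apply]
  exact @List.count_le_length _ instBEqOfDecidableEq p w

lemma mu_lt_of_expLt {w₂ w : List (Fin n × Fin n)}
    (hlen : w₂.length = w.length) (h : expLt (esum w₂) (esum w)) :
    mu w₂ < mu w := by
  have hB : 1 ≤ w.length + 1 := by omega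
  have hphi : phi w₂ < phi w := by
    unfold phi
    rw [hlen]
    exact phi_lt_phi (w.length + 1) hB
      (fun p => by have := esum_lt_len w₂ p; omega) h
  have hinv := nInv_le w₂
  have hinvlt : nInv w₂ < (w.length + 1) ^ 2 := by
    have : (w.length + 1) ^ 2 = w.length * w.length + 2 * w.length + 1 := by
      ring
    rw [← hlen] at this ⊢
    omega
  unfold mu
  rw [hlen]
  have h1 : phi w₂ * (w.length + 1) ^ 2 + (w.length + 1) ^ 2
      = (phi w₂ + 1) * (w.length + 1) ^ 2 := by ring
  have h2 : (phi w₂ + 1) * (w.length + 1) ^ 2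
      ≤ phi w * (w.length + 1) ^ 2 :=
    Nat.mul_le_mul_right _ (by omega)
  omega

lemma mu_lt_of_swap {w₂ w : List (Fin n × Fin n)}
    (hlen : w₂.length = w.length) (hesum : esum w₂ = esum w)
    (hinv : nInv w₂ < nInv w) : mu w₂ < mu w := by
  unfold mu phi
  rw [hlen, hesum]
  omega

end Measure
section Algebra

variable (K : Type*) [Field K] (q : K) {n : ℕ}

lemma rel1 (i j k : Fin n) (h : j < k) :
    Zgen K q n i j * Zgen K q n i k = q • (Zgen K q n i k * Zgen K q n i j) := by
  unfold Zgen
  rw [← map_mul, RingQuot.mkAlgHom_rel K (QMRel.r1 i j k h), map_smul, map_mul]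

lemma rel2 (i j k : Fin n) (h : i < k) :
    Zgen K q n i j * Zgen K q n k j = q • (Zgen K q n k j * Zgen K q n i j) := by
  unfold Zgen
  rw [← map_mul, RingQuot.mkAlgHom_rel K (QMRel.r2 i j k h), map_smul, map_mul]

lemma rel3 (i j s t : Fin n) (h1 : i < s) (h2 : t < j) :
    Zgen K q n i j * Zgen K q n s t = Zgen K q n s t * Zgen K q n i j := by
  unfold Zgen
  rw [← map_mul, RingQuot.mkAlgHom_rel K (QMRel.r3 i j s t h1 h2), map_mul]

lemma rel4 (i j s t : Fin n) (h1 : i < s) (h2 : j < t) :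
    Zgen K q n i j * Zgen K q n s t = Zgen K q n s t * Zgen K q n i j
      + (q - q⁻¹) • (Zgen K q n i t * Zgen K q n s j) := by
  unfold Zgen
  rw [← map_mul, RingQuot.mkAlgHom_rel K (QMRel.r4 i j s t h1 h2), map_add,
    map_smul, map_mul, map_mul]

/-- The submodule of elements supported on exponents `≺ γ`. -/
noncomputable def LowS (b : Module.Basis (Fin n × Fin n → ℕ) K (QuantumMatrix K q n))
    (γ : Fin n × Fin n → ℕ) : Submodule K (QuantumMatrix K q n) :=
  Submodule.comap (b.repr.toLinearMap)
    (Finsupp.supported K K {δ | expLt δ γ})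

lemma mem_LowS {b : Module.Basis (Fin n × Fin n → ℕ) K (QuantumMatrix K q n)}
    {γ : Fin n × Fin n → ℕ} {f : QuantumMatrix K q n} :
    f ∈ LowS K q b γ ↔ ∀ δ, b.repr f δ ≠ 0 → expLt δ γ := by
  simp [LowS, Finsupp.mem_supported, Set.subset_def, Finsupp.mem_support_iff]

lemma LowS_mono {b : Module.Basis (Fin n × Fin n → ℕ) K (QuantumMatrix K q n)}
    {γ₁ γ₂ : Fin n × Fin n → ℕ} (h : expLt γ₁ γ₂) :
    LowS K q b γ₁ ≤ LowS K q b γ₂ := by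
  intro f hf
  rw [mem_LowS] at hf ⊢
  exact fun δ hδ => expLt_trans (hf δ hδ) h

lemma basis_mem_LowS {b : Module.Basis (Fin n × Fin n → ℕ) K (QuantumMatrix K q n)}
    {δ γ : Fin n × Fin n → ℕ} (h : expLt δ γ) : b δ ∈ LowS K q b γ := by
  rw [mem_LowS]
  intro δ' hδ'
  rw [Module.Basis.repr_self] at hδ'
  have : δ' = δ := by
    by_contra hc
    rw [Finsupp.single_apply, if_neg (fun hc' => hc hc'.symm)] at hδ'
    exact hδ' rfl
  rwa [this]

lemma esum_R4_lt (u v : List (Fin n × Fin n)) (i j s t : Fin n)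
    (h1 : i < s) (h2 : j < t) :
    expLt (esum (u ++ (i, t) :: (s, j) :: v))
      (esum (u ++ (i, j) :: (s, t) :: v)) := by
  have hsi : s ≠ i := ne_of_gt h1
  have htj : t ≠ j := ne_of_gt h2
  have hne1 : ((s, t) : Fin n × Fin n) ≠ (i, t) :=
    fun hc => hsi (congrArg Prod.fst hc)
  have hne2 : ((s, t) : Fin n × Fin n) ≠ (s, j) :=
    fun hc => htj (congrArg Prod.snd hc)
  have hne3 : ((s, t) : Fin n × Fin n) ≠ (i, j) :=
    fun hc => hsi (congrArg Prod.fst hc)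
  have hrk1 : rk ((i, t) : Fin n × Fin n) < rk ((s, t) : Fin n × Fin n) :=
    (idxLt_iff_rk _ _).mp (Or.inl h1)
  have hrk2 : rk ((s, j) : Fin n × Fin n) < rk ((s, t) : Fin n × Fin n) :=
    (idxLt_iff_rk _ _).mp (Or.inr ⟨rfl, h2⟩)
  have hrk3 : rk ((i, j) : Fin n × Fin n) < rk ((s, t) : Fin n × Fin n) :=
    (idxLt_iff_rk _ _).mp (Or.inl h1)
  refine ⟨(s, t), ?_, ?_⟩
  · have lhs : esum (u ++ (i, t) :: (s, j) :: v) (s, t)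
        = esum u (s, t) + esum v (s, t) := by
      simp only [esum_append, Pi.add_apply, esum_cons, if_neg hne1, if_neg hne2]
      omega
    have rhs : esum (u ++ (i, j) :: (s, t) :: v) (s, t)
        = esum u (s, t) + esum v (s, t) + 1 := by
      simp only [esum_append, Pi.add_apply, esum_cons, if_neg hne3, if_pos rfl,
        if_true]
      omega
    omega
  · intro r hr
    rw [idxLt_iff_rk] at hr
    have hner : ∀ p : Fin n × Fin n, rk p < rk r → r ≠ p :=
      fun p hp hc => by rw [hc] at hp; omega
    have h4 : r ≠ (i, t) := hner _ (by omega)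
    have h5 : r ≠ (s, j) := hner _ (by omega)
    have h6 : r ≠ (i, j) := hner _ (by omega)
    have h7 : r ≠ (s, t) := hner _ (by omega)
    simp only [esum_append, Pi.add_apply, esum_cons, if_neg h4, if_neg h5,
      if_neg h6, if_neg h7]

theorem straighten (hq : q ≠ 0)
    (b : Module.Basis (Fin n × Fin n → ℕ) K (QuantumMatrix K q n))
    (hb : ∀ α, b α = zmon K q α) (w : List (Fin n × Fin n)) :
    ∃ c : K, c ≠ 0 ∧
      Zprod K q w - c • zmon K q (esum w) ∈ LowS K q b (esum w) := by
  suffices H : ∀ N w, mu w < N → ∃ c : K, c ≠ 0 ∧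
      Zprod K q w - c • zmon K q (esum w) ∈ LowS K q b (esum w) from
    H (mu w + 1) w (by omega)
  intro N
  induction N with
  | zero => intro w hw; omega
  | succ N ih =>
    intro w hw
    rcases sorted_or_swap w with hs | ⟨u, x, y, v, rfl, hab⟩
    · refine ⟨1, one_ne_zero, ?_⟩
      rw [Zprod_sorted K q w hs, one_smul, sub_self]
      exact Submodule.zero_mem _
    · obtain ⟨i, j⟩ := x
      obtain ⟨s, t⟩ := y
      have hidx : idxLt ((i, j) : Fin n × Fin n) (s, t) :=
        (idxLt_iff_rk _ _).mpr hab
      have hsplit : ∀ c d : Fin n × Fin n,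
          Zprod K q (u ++ c :: d :: v)
          = Zprod K q u * (Zg K q c * Zg K q d) * Zprod K q v := by
        intro c d
        simp [Zprod_append, Zprod_cons, mul_assoc]
      have hlen : ∀ c d : Fin n × Fin n,
          (u ++ c :: d :: v).length = (u ++ ((i,j) : Fin n × Fin n) :: (s,t) :: v).length := by
        intro c d; simp
      have hesum' : esum (u ++ ((s,t) : Fin n × Fin n) :: (i,j) :: v)
          = esum (u ++ ((i,j) : Fin n × Fin n) :: (s,t) :: v) := by
        funext r
        simp only [esum_append, Pi.add_apply, esum_cons]
        ring
      have hmu' : mu (u ++ ((s,t) : Fin n × Fin n) :: (i,j) :: v)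
          < mu (u ++ ((i,j) : Fin n × Fin n) :: (s,t) :: v) :=
        mu_lt_of_swap (hlen (s,t) (i,j)) hesum' (nInv_swap u v _ _ hab)
      -- uniform handling of the q-commutation cases
      have key : ∀ cq : K, cq ≠ 0 →
          Zg K q ((i, j) : Fin n × Fin n) * Zg K q ((s, t) : Fin n × Fin n)
            = cq • (Zg K q ((s, t) : Fin n × Fin n) * Zg K q ((i, j) : Fin n × Fin n)) →
          ∃ c : K, c ≠ 0 ∧
            Zprod K q (u ++ (i,j) :: (s,t) :: v)
              - c • zmon K q (esum (u ++ (i,j) :: (s,t) :: v))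
              ∈ LowS K q b (esum (u ++ (i,j) :: (s,t) :: v)) := by
        intro cq hcq hrel
        obtain ⟨c', hc', hmem'⟩ := ih (u ++ (s,t) :: (i,j) :: v) (by omega)
        rw [hesum'] at hmem'
        have hZw : Zprod K q (u ++ (i,j) :: (s,t) :: v)
            = cq • Zprod K q (u ++ (s,t) :: (i,j) :: v) := by
          rw [hsplit, hsplit, hrel, mul_smul_comm, smul_mul_assoc]
        refine ⟨cq * c', mul_ne_zero hcq hc', ?_⟩
        have heq2 : Zprod K q (u ++ (i,j) :: (s,t) :: v)
            - (cq * c') • zmon K q (esum (u ++ (i,j) :: (s,t) :: v))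
            = cq • (Zprod K q (u ++ (s,t) :: (i,j) :: v)
              - c' • zmon K q (esum (u ++ (i,j) :: (s,t) :: v))) := by
          rw [hZw, smul_sub, smul_smul]
        rw [heq2]
        exact Submodule.smul_mem _ _ hmem'
      rcases hidx with h | ⟨h, h2⟩
      · -- i < s
        rcases lt_trichotomy j t with hjt | rfl | hjt
        · -- R4 case
          have hrel := rel4 K q i j s t h hjt
          obtain ⟨c', hc', hmem'⟩ := ih (u ++ (s,t) :: (i,j) :: v) (by omega)
          rw [hesum'] at hmem'
          have hlt : expLt (esum (u ++ ((i,t) : Fin n × Fin n) :: (s,j) :: v))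
              (esum (u ++ ((i,j) : Fin n × Fin n) :: (s,t) :: v)) :=
            esum_R4_lt u v i j s t h hjt
          have hmu₂ : mu (u ++ ((i,t) : Fin n × Fin n) :: (s,j) :: v)
              < mu (u ++ ((i,j) : Fin n × Fin n) :: (s,t) :: v) :=
            mu_lt_of_expLt (hlen (i,t) (s,j)) hlt
          obtain ⟨c₂, hc₂, hmem₂⟩ := ih (u ++ (i,t) :: (s,j) :: v) (by omega)
          have hZw : Zprod K q (u ++ (i,j) :: (s,t) :: v)
              = Zprod K q (u ++ (s,t) :: (i,j) :: v)
                + (q - q⁻¹) • Zprod K q (u ++ (i,t) :: (s,j) :: v) := by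
            rw [hsplit, hsplit, hsplit]
            have : Zg K q ((i, j) : Fin n × Fin n) * Zg K q ((s, t) : Fin n × Fin n)
                = Zg K q ((s, t) : Fin n × Fin n) * Zg K q ((i, j) : Fin n × Fin n)
                  + (q - q⁻¹) • (Zg K q ((i, t) : Fin n × Fin n) * Zg K q ((s, j) : Fin n × Fin n)) :=
              hrel
            rw [this, mul_add, add_mul, mul_smul_comm, smul_mul_assoc]
          have hZw₂mem : Zprod K q (u ++ (i,t) :: (s,j) :: v)
              ∈ LowS K q b (esum (u ++ ((i,j) : Fin n × Fin n) :: (s,t) :: v)) := by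
            have hm1 : Zprod K q (u ++ (i,t) :: (s,j) :: v)
                - c₂ • zmon K q (esum (u ++ (i,t) :: (s,j) :: v))
                ∈ LowS K q b (esum (u ++ ((i,j) : Fin n × Fin n) :: (s,t) :: v)) :=
              LowS_mono K q hlt hmem₂
            have hm2 : c₂ • zmon K q (esum (u ++ (i,t) :: (s,j) :: v))
                ∈ LowS K q b (esum (u ++ ((i,j) : Fin n × Fin n) :: (s,t) :: v)) := by
              rw [← hb]
              exact Submodule.smul_mem _ _ (basis_mem_LowS K q hlt)
            have := Submodule.add_mem _ hm1 hm2
            simpa using this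
          refine ⟨c', hc', ?_⟩
          have heq2 : Zprod K q (u ++ (i,j) :: (s,t) :: v)
              - c' • zmon K q (esum (u ++ (i,j) :: (s,t) :: v))
              = (Zprod K q (u ++ (s,t) :: (i,j) :: v)
                 - c' • zmon K q (esum (u ++ (i,j) :: (s,t) :: v)))
                + (q - q⁻¹) • Zprod K q (u ++ (i,t) :: (s,j) :: v) := by
            rw [hZw]; abel
          rw [heq2]
          exact Submodule.add_mem _ hmem' (Submodule.smul_mem _ _ hZw₂mem)
        · -- j = t : R2
          exact key q hq (rel2 K q i j s h)
        · -- t < j : R3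
          exact key 1 one_ne_zero (by rw [one_smul]; exact rel3 K q i j s t h hjt)
      · -- i = s, j < t : R1
        have his : i = s := h
        subst his
        exact key q hq (rel1 K q i j t h2)
end Algebra
/-- the lexicographic order satisfies condition (2) of the
definition of a monomial ordering: if `γ ≠ 0`, `β ≠ γ`, and
`γ = LE(z^α z^β z^η)`, then `β ≺ γ`; in particular `0 ≺ γ` for `γ ≠ 0`. -/
theorem expLt_monomial_ordering_cond2 (K : Type*) [Field K] [CharZero K]
    (q : K) (hq : q ≠ 0) (n : ℕ) (hn : 2 ≤ n)
    (b : Module.Basis (Fin n × Fin n → ℕ) K (QuantumMatrix K q n))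
    (hb : ∀ α, b α = zmon K q α) :
    (∀ α β η γ : Fin n × Fin n → ℕ, γ ≠ 0 → β ≠ γ →
      IsLeadExp b (zmon K q α * zmon K q β * zmon K q η) γ → expLt β γ) ∧
    (∀ γ : Fin n × Fin n → ℕ, γ ≠ 0 → expLt 0 γ) := by
  constructor
  · intro α β η γ hγ0 hβγ hlead
    have hw : zmon K q α * zmon K q β * zmon K q η
        = Zprod K q (word α ++ word β ++ word η) := by
      rw [Zprod_append, Zprod_append, Zprod_word, Zprod_word, Zprod_word]
    have hesum : esum (word α ++ word β ++ word η) = α + β + η := by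
      rw [esum_append, esum_append, esum_word, esum_word, esum_word]
    obtain ⟨c, hc, hmem⟩ :=
      straighten K q hq b hb (word α ++ word β ++ word η)
    rw [hesum, ← hw] at hmem
    set f := zmon K q α * zmon K q β * zmon K q η with hf
    set σ := α + β + η with hσ
    set g := f - c • zmon K q σ with hg
    have hfg : f = g + c • zmon K q σ := by rw [hg]; abel
    have hreprg : ∀ δ, b.repr g δ ≠ 0 → expLt δ σ := (mem_LowS K q).mp hmem
    have hrepr : ∀ δ, b.repr f δ
        = b.repr g δ + c * Finsupp.single σ (1 : K) δ := by
      intro δ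
      rw [hfg, ← hb σ, map_add, map_smul, Module.Basis.repr_self]
      simp only [Finsupp.coe_add, Finsupp.coe_smul, Pi.add_apply,
        Pi.smul_apply, smul_eq_mul]
    have hreprσ : b.repr f σ = c := by
      rw [hrepr σ, Finsupp.single_eq_same]
      have : b.repr g σ = 0 := by
        by_contra hcon
        exact expLt_irrefl σ (hreprg σ hcon)
      rw [this]
      ring
    have hcase := hlead.2 σ (by rw [hreprσ]; exact hc)
    rcases hcase with rfl | hlt
    · refine expLt_of_le_of_ne (fun p => ?_) hβγ
      simp only [hσ, Pi.add_apply]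
      omega
    · exfalso
      have hγσ : γ ≠ σ := fun hc' => expLt_irrefl σ (hc' ▸ hlt)
      have hfγ : b.repr f γ = b.repr g γ := by
        rw [hrepr γ, Finsupp.single_apply, if_neg (fun hc' => hγσ hc'.symm)]
        ring
      have : expLt γ σ := hreprg γ (by rw [← hfγ]; exact hlead.1)
      exact expLt_asymm this hlt
  · intro γ hγ0
    exact expLt_of_le_of_ne (fun p => Nat.zero_le _) (Ne.symm hγ0)
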